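/- An undirected simple graph G with m edges is (2,3)-orientable if and only if there exists a friendly vertex labelling f : V → {0,1} such that the number γ of edges of G whose two endpoints receive the same label satisfies |3γ − m| ≤ 2. -/

import Mathlib

/-- A `(0,1)`-vertex labelling is friendly if the numbers of vertices labelled `0`
and labelled `1` differ by at most one. -/
def Friendly {V : Type*} (f : V → Fin 2) : Prop :=
  |(Nat.card {v : V // f v = 0} : ℤ) - (Nat.card {v : V // f v = 1} : ℤ)| ≤ 1

/-- The number of arcs of the digraph `D` whose induced label `f(head) - f(tail)`
equals `x`. -/
noncomputable def arcCount {V : Type*} (D : V → V → Prop) (f : V → Fin 2) (x : ℤ) : ℕ :=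
  Nat.card {p : V × V // D p.1 p.2 ∧ ((f p.2).val : ℤ) - ((f p.1).val : ℤ) = x}

/-- A digraph is `(2,3)`-cordial if some friendly vertex labelling induces an arc
labelling in which the numbers of arcs labelled `1`, `-1`, `0` pairwise differ by
at most one. -/
def Cordial23 {V : Type*} (D : V → V → Prop) : Prop :=
  ∃ f : V → Fin 2, Friendly f ∧
    |(arcCount D f 1 : ℤ) - (arcCount D f (-1) : ℤ)| ≤ 1 ∧
    |(arcCount D f 1 : ℤ) - (arcCount D f 0 : ℤ)| ≤ 1 ∧
    |(arcCount D f (-1) : ℤ) - (arcCount D f 0 : ℤ)| ≤ 1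

/-- A tournament: a loopless digraph with exactly one arc between every pair of
distinct vertices. -/
def IsTournament {V : Type*} (D : V → V → Prop) : Prop :=
  (∀ v : V, ¬ D v v) ∧ ∀ u v : V, u ≠ v → (D u v ↔ ¬ D v u)

/-- A (simple) digraph: loopless, with at most one arc between any two distinct
vertices (an orientation of a simple graph). -/
def IsDigraph {V : Type*} (D : V → V → Prop) : Prop :=
  (∀ v : V, ¬ D v v) ∧ ∀ u v : V, D u v → ¬ D v u

/-- An undirected simple graph is (2,3)-orientable if some orientation of it is
(2,3)-cordial. -/
def Orientable23 {V : Type*} (G : SimpleGraph V) : Prop :=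
  ∃ D : V → V → Prop, (∀ u v : V, D u v → G.Adj u v) ∧
    (∀ u v : V, G.Adj u v → (D u v ↔ ¬ D v u)) ∧ Cordial23 D


section Helpers
set_option linter.unusedSectionVars false
set_option linter.unusedVariables false

variable {V : Type*} [Fintype V] {G : SimpleGraph V} {D : V → V → Prop} {f : V → Fin 2}

lemma lab_zero (a b : Fin 2) : ((b.val : ℤ) - (a.val : ℤ) = 0) ↔ a = b := by
  fin_cases a <;> fin_cases b <;> decide
lemma lab_one (a b : Fin 2) : ((b.val : ℤ) - (a.val : ℤ) = 1) ↔ (a = 0 ∧ b = 1) := by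
  fin_cases a <;> fin_cases b <;> decide
lemma lab_negone (a b : Fin 2) : ((b.val : ℤ) - (a.val : ℤ) = -1) ↔ (a = 1 ∧ b = 0) := by
  fin_cases a <;> fin_cases b <;> decide
lemma fin2_ne (a b : Fin 2) : a ≠ b ↔ (a = 0 ∧ b = 1) ∨ (a = 1 ∧ b = 0) := by
  fin_cases a <;> fin_cases b <;> decide

lemma arcCount_zero_eq' (D : V → V → Prop) (f : V → Fin 2) :
    Nat.card {p : V × V // D p.1 p.2 ∧ ((f p.2).val : ℤ) - ((f p.1).val : ℤ) = 0}
      = Nat.card {p : V × V // D p.1 p.2 ∧ f p.1 = f p.2} :=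
  Nat.card_congr (Equiv.subtypeEquivRight fun p => and_congr_right fun _ => lab_zero _ _)
lemma arcCount_one_eq' (D : V → V → Prop) (f : V → Fin 2) :
    Nat.card {p : V × V // D p.1 p.2 ∧ ((f p.2).val : ℤ) - ((f p.1).val : ℤ) = 1}
      = Nat.card {p : V × V // D p.1 p.2 ∧ f p.1 = 0 ∧ f p.2 = 1} :=
  Nat.card_congr (Equiv.subtypeEquivRight fun p => and_congr_right fun _ => lab_one _ _)
lemma arcCount_negone_eq' (D : V → V → Prop) (f : V → Fin 2) :
    Nat.card {p : V × V // D p.1 p.2 ∧ ((f p.2).val : ℤ) - ((f p.1).val : ℤ) = -1}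
      = Nat.card {p : V × V // D p.1 p.2 ∧ f p.1 = 1 ∧ f p.2 = 0} :=
  Nat.card_congr (Equiv.subtypeEquivRight fun p => and_congr_right fun _ => lab_negone _ _)

lemma card_zero_arcs (hD1 : ∀ u v, D u v → G.Adj u v)
    (hD2 : ∀ u v, G.Adj u v → (D u v ↔ ¬ D v u)) :
    Nat.card {p : V × V // D p.1 p.2 ∧ f p.1 = f p.2}
      = Nat.card {e : Sym2 V // ∃ u v : V, e = s(u, v) ∧ G.Adj u v ∧ f u = f v} := by
  apply Nat.card_congr
  refine Equiv.ofBijective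
    (fun p => ⟨s(p.1.1, p.1.2), p.1.1, p.1.2, rfl, hD1 _ _ p.2.1, p.2.2⟩) ⟨?_, ?_⟩
  · rintro ⟨⟨u, v⟩, hD, hf⟩ ⟨⟨u', v'⟩, hD', hf'⟩ h
    simp only [Subtype.mk.injEq, Sym2.eq_iff] at h
    rcases h with ⟨rfl, rfl⟩ | ⟨rfl, rfl⟩
    · rfl
    · exact absurd hD' ((hD2 _ _ (hD1 _ _ hD)).mp hD)
  · rintro ⟨e, u, v, rfl, hadj, hf⟩
    by_cases h : D u v
    · exact ⟨⟨(u, v), h, hf⟩, rfl⟩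
    · exact ⟨⟨(v, u), (hD2 v u hadj.symm).mpr h, hf.symm⟩, Subtype.ext (Sym2.eq_swap)⟩

lemma card_pm_arcs (hD1 : ∀ u v, D u v → G.Adj u v)
    (hD2 : ∀ u v, G.Adj u v → (D u v ↔ ¬ D v u)) :
    Nat.card {p : V × V // D p.1 p.2 ∧ f p.1 = 0 ∧ f p.2 = 1}
      + Nat.card {p : V × V // D p.1 p.2 ∧ f p.1 = 1 ∧ f p.2 = 0}
      = Nat.card {e : Sym2 V // ∃ u v : V, e = s(u, v) ∧ G.Adj u v ∧ f u ≠ f v} := by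
  rw [← Nat.card_sum]
  apply Nat.card_congr
  refine Equiv.ofBijective (Sum.elim
      (fun p => ⟨s(p.1.1, p.1.2), p.1.1, p.1.2, rfl, hD1 _ _ p.2.1,
        by rw [p.2.2.1, p.2.2.2]; decide⟩)
      (fun p => ⟨s(p.1.1, p.1.2), p.1.1, p.1.2, rfl, hD1 _ _ p.2.1,
        by rw [p.2.2.1, p.2.2.2]; decide⟩)) ⟨?_, ?_⟩
  · rintro (⟨⟨u, v⟩, hD, h0, h1⟩ | ⟨⟨u, v⟩, hD, h0, h1⟩)
      (⟨⟨u', v'⟩, hD', h0', h1'⟩ | ⟨⟨u', v'⟩, hD', h0', h1'⟩) h <;>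
      simp only [Sum.elim_inl, Sum.elim_inr, Subtype.mk.injEq, Sym2.eq_iff] at h <;>
      rcases h with ⟨rfl, rfl⟩ | ⟨rfl, rfl⟩
    · rfl
    · exact absurd hD' ((hD2 _ _ (hD1 _ _ hD)).mp hD)
    · rw [h0'] at h0; exact absurd h0 (by decide)
    · exact absurd hD' ((hD2 _ _ (hD1 _ _ hD)).mp hD)
    · rw [h0'] at h0; exact absurd h0 (by decide)
    · exact absurd hD' ((hD2 _ _ (hD1 _ _ hD)).mp hD)
    · rfl
    · exact absurd hD' ((hD2 _ _ (hD1 _ _ hD)).mp hD)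
  · rintro ⟨e, u, v, rfl, hadj, hne⟩
    rcases (fin2_ne (f u) (f v)).mp hne with ⟨h0, h1⟩ | ⟨h1, h0⟩
    · by_cases h : D u v
      · exact ⟨Sum.inl ⟨(u, v), h, h0, h1⟩, rfl⟩
      · exact ⟨Sum.inr ⟨(v, u), (hD2 v u hadj.symm).mpr h, h1, h0⟩,
          Subtype.ext (Sym2.eq_swap)⟩
    · by_cases h : D u v
      · exact ⟨Sum.inr ⟨(u, v), h, h1, h0⟩, rfl⟩
      · exact ⟨Sum.inl ⟨(v, u), (hD2 v u hadj.symm).mpr h, h0, h1⟩,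
          Subtype.ext (Sym2.eq_swap)⟩

lemma card_mono_add_bi (G : SimpleGraph V) (f : V → Fin 2) :
    Nat.card {e : Sym2 V // ∃ u v : V, e = s(u, v) ∧ G.Adj u v ∧ f u = f v}
      + Nat.card {e : Sym2 V // ∃ u v : V, e = s(u, v) ∧ G.Adj u v ∧ f u ≠ f v}
      = Nat.card G.edgeSet := by
  classical
  rw [← Nat.card_sum]
  apply Nat.card_congr
  refine Equiv.ofBijective (Sum.elim
      (fun e => ⟨e.1, by obtain ⟨u, v, he, hadj, -⟩ := e.2; rw [he]; exact hadj⟩)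
      (fun e => ⟨e.1, by obtain ⟨u, v, he, hadj, -⟩ := e.2; rw [he]; exact hadj⟩)) ⟨?_, ?_⟩
  · rintro (⟨e, he⟩ | ⟨e, he⟩) (⟨e', he'⟩ | ⟨e', he'⟩) h <;>
      simp only [Sum.elim_inl, Sum.elim_inr, Subtype.mk.injEq] at h <;> subst h
    · rfl
    · obtain ⟨u, v, he1, -, hf⟩ := he
      obtain ⟨u', v', he1', -, hne⟩ := he'
      rw [he1, Sym2.eq_iff] at he1'
      exfalso
      rcases he1' with ⟨rfl, rfl⟩ | ⟨rfl, rfl⟩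
      · exact hne hf
      · exact hne hf.symm
    · obtain ⟨u, v, he1, -, hne⟩ := he
      obtain ⟨u', v', he1', -, hf⟩ := he'
      rw [he1, Sym2.eq_iff] at he1'
      exfalso
      rcases he1' with ⟨rfl, rfl⟩ | ⟨rfl, rfl⟩
      · exact hne hf
      · exact hne hf.symm
    · rfl
  · rintro ⟨e, he⟩
    induction e using Sym2.inductionOn with
    | hf u v =>
      have hadj : G.Adj u v := he
      by_cases hfv : f u = f v
      · exact ⟨Sum.inl ⟨s(u, v), u, v, rfl, hadj, hfv⟩, rfl⟩
      · exact ⟨Sum.inr ⟨s(u, v), u, v, rfl, hadj, hfv⟩, rfl⟩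

end Helpers

/-- A simple graph with m edges is (2,3)-orientable if and only if some friendly
vertex labelling makes the number γ of monochromatic edges satisfy |3γ - m| ≤ 2. -/
theorem orientable_iff_third_monochromatic {V : Type*} [Fintype V]
    (G : SimpleGraph V) (m : ℕ) (hm : Nat.card G.edgeSet = m) :
    Orientable23 G ↔
      ∃ f : V → Fin 2, Friendly f ∧
        |3 * (Nat.card {e : Sym2 V // ∃ u v : V, e = s(u, v) ∧ G.Adj u v ∧ f u = f v} : ℤ)
          - (m : ℤ)| ≤ 2 := by
    classical
  constructor
  · rintro ⟨D, hD1, hD2, f, hfr, h1, h2, h3⟩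
    refine ⟨f, hfr, ?_⟩
    have e0 : arcCount D f 0
        = Nat.card {e : Sym2 V // ∃ u v : V, e = s(u, v) ∧ G.Adj u v ∧ f u = f v} := by
      rw [show arcCount D f 0 = _ from arcCount_zero_eq' D f]
      exact card_zero_arcs hD1 hD2
    have e1 : arcCount D f 1 + arcCount D f (-1)
        = Nat.card {e : Sym2 V // ∃ u v : V, e = s(u, v) ∧ G.Adj u v ∧ f u ≠ f v} := by
      rw [show arcCount D f 1 = _ from arcCount_one_eq' D f,
        show arcCount D f (-1) = _ from arcCount_negone_eq' D f]
      exact card_pm_arcs hD1 hD2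
    have e2 := card_mono_add_bi (G := G) (f := f)
    rw [hm] at e2
    rw [abs_le] at h1 h2 h3 ⊢
    omega
  · rintro ⟨f, hfr, hγ⟩
    have e2 := card_mono_add_bi (G := G) (f := f)
    rw [hm] at e2
    set γ := Nat.card {e : Sym2 V // ∃ u v : V, e = s(u, v) ∧ G.Adj u v ∧ f u = f v} with hγdef
    set P01 : Finset (V × V) :=
      Finset.univ.filter (fun p : V × V => G.Adj p.1 p.2 ∧ f p.1 = 0 ∧ f p.2 = 1) with hP01def
    have hP01card : P01.card
        = Nat.card {e : Sym2 V // ∃ u v : V, e = s(u, v) ∧ G.Adj u v ∧ f u ≠ f v} := by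
      rw [← Nat.card_eq_finsetCard]
      apply Nat.card_congr
      refine Equiv.ofBijective (fun p =>
        ⟨s(p.1.1, p.1.2), p.1.1, p.1.2, rfl, (Finset.mem_filter.mp p.2).2.1, by
          rw [(Finset.mem_filter.mp p.2).2.2.1, (Finset.mem_filter.mp p.2).2.2.2]
          decide⟩) ⟨?_, ?_⟩
      · rintro ⟨⟨u, v⟩, hp⟩ ⟨⟨u', v'⟩, hp'⟩ h
        obtain ⟨-, -, h0, h1⟩ := Finset.mem_filter.mp hp
        obtain ⟨-, -, h0', h1'⟩ := Finset.mem_filter.mp hp'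
        simp only [Subtype.mk.injEq, Sym2.eq_iff] at h
        rcases h with ⟨rfl, rfl⟩ | ⟨rfl, rfl⟩
        · rfl
        · rw [h0'] at h1; exact absurd h1 (by decide)
      · rintro ⟨e, u, v, rfl, hadj, hne⟩
        rcases (fin2_ne (f u) (f v)).mp hne with ⟨h0, h1⟩ | ⟨h1, h0⟩
        · exact ⟨⟨(u, v), Finset.mem_filter.mpr ⟨Finset.mem_univ _, hadj, h0, h1⟩⟩, rfl⟩
        · exact ⟨⟨(v, u), Finset.mem_filter.mpr ⟨Finset.mem_univ _, hadj.symm, h0, h1⟩⟩,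
            Subtype.ext (Sym2.eq_swap)⟩
    obtain ⟨S, hSsub, hScard⟩ :=
      Finset.exists_subset_card_eq (s := P01) (n := (P01.card + 1) / 2) (by omega)
    have hS : ∀ p ∈ S, G.Adj p.1 p.2 ∧ f p.1 = 0 ∧ f p.2 = 1 :=
      fun p hp => (Finset.mem_filter.mp (hSsub hp)).2
    set D : V → V → Prop := fun u v => G.Adj u v ∧
      ((f u = f v ∧ ((Fintype.equivFin V u : ℕ) < (Fintype.equivFin V v : ℕ))) ∨
        (u, v) ∈ S ∨ (f u = 1 ∧ f v = 0 ∧ (v, u) ∉ S)) with hDdef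
    have hD1 : ∀ u v, D u v → G.Adj u v := fun u v h => h.1
    have hD2 : ∀ u v, G.Adj u v → (D u v ↔ ¬ D v u) := by
      intro u v hadj
      have hne : u ≠ v := hadj.ne
      have hval : (Fintype.equivFin V u : ℕ) ≠ (Fintype.equivFin V v : ℕ) :=
        fun h => hne ((Fintype.equivFin V).injective (Fin.val_injective h))
      have hcase : ∀ a : Fin 2, a = 0 ∨ a = 1 := by decide
      have f01 : (0 : Fin 2) ≠ 1 := by decide
      have f10 : (1 : Fin 2) ≠ 0 := by decide
      simp only [hDdef]
      rcases hcase (f u) with hu | hu <;> rcases hcase (f v) with hv | hv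
      · have h1 : (u, v) ∉ S := by
          intro h; have hx := (hS _ h).2.2; rw [hv] at hx; exact f01 hx
        have h2 : (v, u) ∉ S := by
          intro h; have hx := (hS _ h).2.2; rw [hu] at hx; exact f01 hx
        constructor
        · rintro ⟨-, h⟩ ⟨-, hc⟩
          have hr1 : (Fintype.equivFin V u : ℕ) < (Fintype.equivFin V v : ℕ) := by
            rcases h with ⟨-, hr⟩ | h | ⟨h1', -⟩
            · exact hr
            · exact absurd h h1
            · rw [hu] at h1'; exact absurd h1' f01
          have hr2 : (Fintype.equivFin V v : ℕ) < (Fintype.equivFin V u : ℕ) := by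
            rcases hc with ⟨-, hr⟩ | hc | ⟨h1', -⟩
            · exact hr
            · exact absurd hc h2
            · rw [hv] at h1'; exact absurd h1' f01
          omega
        · intro h
          refine ⟨hadj, Or.inl ⟨hu.trans hv.symm, ?_⟩⟩
          by_contra hb
          exact h ⟨hadj.symm, Or.inl ⟨hv.trans hu.symm, by omega⟩⟩
      · have h2 : (v, u) ∉ S := by
          intro h; have hx := (hS _ h).2.1; rw [hv] at hx; exact f10 hx
        have hfufv : f u ≠ f v := by rw [hu, hv]; exact f01
        have hfvfu : f v ≠ f u := by rw [hu, hv]; exact f10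
        constructor
        · rintro ⟨-, h⟩ ⟨-, hc⟩
          have hin : (u, v) ∈ S := by
            rcases h with ⟨heq, -⟩ | h | ⟨h1', -⟩
            · exact absurd heq hfufv
            · exact h
            · rw [hu] at h1'; exact absurd h1' f01
          rcases hc with ⟨heq, -⟩ | hc | ⟨-, -, hns⟩
          · exact hfvfu heq
          · exact h2 hc
          · exact hns hin
        · intro h
          refine ⟨hadj, Or.inr (Or.inl ?_)⟩
          by_contra hb
          exact h ⟨hadj.symm, Or.inr (Or.inr ⟨hv, hu, hb⟩)⟩
      · have h1 : (u, v) ∉ S := by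
          intro h; have hx := (hS _ h).2.1; rw [hu] at hx; exact f10 hx
        have hfufv : f u ≠ f v := by rw [hu, hv]; exact f10
        have hfvfu : f v ≠ f u := by rw [hu, hv]; exact f01
        constructor
        · rintro ⟨-, h⟩ ⟨-, hc⟩
          have hns : (v, u) ∉ S := by
            rcases h with ⟨heq, -⟩ | h | ⟨-, -, hns⟩
            · exact absurd heq hfufv
            · exact absurd h h1
            · exact hns
          rcases hc with ⟨heq, -⟩ | hc | ⟨h1', -⟩
          · exact hfvfu heq
          · exact hns hc
          · rw [hv] at h1'; exact absurd h1' f01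
        · intro h
          refine ⟨hadj, Or.inr (Or.inr ⟨hu, hv, ?_⟩)⟩
          intro hin
          exact h ⟨hadj.symm, Or.inr (Or.inl hin)⟩
      · have h1 : (u, v) ∉ S := by
          intro h; have hx := (hS _ h).2.1; rw [hu] at hx; exact f10 hx
        have h2 : (v, u) ∉ S := by
          intro h; have hx := (hS _ h).2.1; rw [hv] at hx; exact f10 hx
        constructor
        · rintro ⟨-, h⟩ ⟨-, hc⟩
          have hr1 : (Fintype.equivFin V u : ℕ) < (Fintype.equivFin V v : ℕ) := by
            rcases h with ⟨-, hr⟩ | h | ⟨-, h0', -⟩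
            · exact hr
            · exact absurd h h1
            · rw [hv] at h0'; exact absurd h0' f10
          have hr2 : (Fintype.equivFin V v : ℕ) < (Fintype.equivFin V u : ℕ) := by
            rcases hc with ⟨-, hr⟩ | hc | ⟨-, h0', -⟩
            · exact hr
            · exact absurd hc h2
            · rw [hu] at h0'; exact absurd h0' f10
          omega
        · intro h
          refine ⟨hadj, Or.inl ⟨hu.trans hv.symm, ?_⟩⟩
          by_contra hb
          exact h ⟨hadj.symm, Or.inl ⟨hv.trans hu.symm, by omega⟩⟩
    have hA : arcCount D f 1 = S.card := by
      rw [show arcCount D f 1 = _ from arcCount_one_eq' D f, ← Nat.card_eq_finsetCard]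
      apply Nat.card_congr
      apply Equiv.subtypeEquivRight
      intro p
      constructor
      · rintro ⟨⟨hadj, h⟩, h0, h1⟩
        rcases h with ⟨heq, -⟩ | h | ⟨h1', -⟩
        · rw [h0, h1] at heq; exact absurd heq (by decide)
        · exact h
        · rw [h0] at h1'; exact absurd h1'.symm (by decide)
      · intro hp
        obtain ⟨hadj, h0, h1⟩ := hS _ hp
        exact ⟨⟨hadj, Or.inr (Or.inl (by exact hp))⟩, h0, h1⟩
    have hB : arcCount D f (-1) = (P01 \ S).card := by
      rw [show arcCount D f (-1) = _ from arcCount_negone_eq' D f, ← Nat.card_eq_finsetCard]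
      apply Nat.card_congr
      refine Equiv.ofBijective (fun p => ⟨(p.1.2, p.1.1), ?_⟩) ⟨?_, ?_⟩
      · obtain ⟨⟨hadj, h⟩, h1, h0⟩ := p.2
        have hns : (p.1.2, p.1.1) ∉ S := by
          rcases h with ⟨heq, -⟩ | hin | ⟨-, -, hns⟩
          · rw [h1, h0] at heq; exact absurd heq (by decide)
          · have := (hS _ hin).2.1; rw [h1] at this; exact absurd this.symm (by decide)
          · exact hns
        refine Finset.mem_sdiff.mpr ⟨Finset.mem_filter.mpr
          ⟨Finset.mem_univ _, hadj.symm, h0, h1⟩, hns⟩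
      · intro p q h
        have h' : (p.1.2, p.1.1) = (q.1.2, q.1.1) := congrArg Subtype.val h
        exact Subtype.ext (Prod.ext (congrArg Prod.snd h') (congrArg Prod.fst h'))
      · rintro ⟨⟨a, b⟩, hq⟩
        obtain ⟨hP, hnS⟩ := Finset.mem_sdiff.mp hq
        obtain ⟨-, hadj, h0, h1⟩ := Finset.mem_filter.mp hP
        exact ⟨⟨(b, a), ⟨hadj.symm, Or.inr (Or.inr ⟨h1, h0, hnS⟩)⟩, h1, h0⟩, rfl⟩
    have hΓ : arcCount D f 0 = γ := by
      rw [show arcCount D f 0 = _ from arcCount_zero_eq' D f]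
      exact card_zero_arcs hD1 hD2
    have hBS : (P01 \ S).card = P01.card - S.card := Finset.card_sdiff_of_subset hSsub
    have hSle : S.card ≤ P01.card := Finset.card_le_card hSsub
    refine ⟨D, hD1, hD2, f, hfr, ?_, ?_, ?_⟩ <;>
      simp only [hA, hB, hΓ, hBS] <;> rw [abs_le] at hγ ⊢ <;> omega
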